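/- Let n ≥ 1, let W_1, …, W_n be independent random variables with W_i exponentially distributed with rate parameter β_i > 0 (density β_i e^{−β_i x} on (0, ∞)), and let c_1, …, c_n ≥ 0 be real numbers. Then E[ (Σ_{i=1}^n c_i W_i) / (Σ_{i=1}^n W_i) ] = ∫_0^∞ ( Π_{j=1}^n β_j/(t + β_j) ) · ( Σ_{i=1}^n c_i/(t + β_i) ) dt. -/

import Mathlib

open MeasureTheory ProbabilityTheory Real

open Set
open scoped ENNReal

section Aux

variable {Ω : Type*} [MeasurableSpace Ω] {μ : Measure Ω}

lemma aux_iIndepFun_ae_eq {ι : Type*} {β : ι → Type*} {m : ∀ i, MeasurableSpace (β i)}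
    {f g : ∀ i, Ω → β i} (h : iIndepFun f μ) (h' : ∀ i, f i =ᵐ[μ] g i) :
    iIndepFun g μ := by
  rw [iIndepFun_iff_measure_inter_preimage_eq_mul] at h ⊢
  intro S sets hsets
  have key : ∀ i, g i ⁻¹' sets i =ᵐ[μ] f i ⁻¹' sets i := fun i => by
    filter_upwards [h' i] with ω hω
    show (g i ω ∈ sets i) = (f i ω ∈ sets i)
    rw [hω]
  have h1 : μ (⋂ i ∈ S, g i ⁻¹' sets i) = μ (⋂ i ∈ S, f i ⁻¹' sets i) := by
    apply measure_congr
    have : ∀ᵐ ω ∂μ, ∀ i ∈ (S : Set _), (ω ∈ g i ⁻¹' sets i ↔ ω ∈ f i ⁻¹' sets i) := by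
      refine (MeasureTheory.ae_ball_iff S.countable_toSet).2 ?_
      intro i _
      filter_upwards [h' i] with ω hω
      simp only [Set.mem_preimage, hω]
    rw [Filter.eventuallyEq_set]
    filter_upwards [this] with ω hω
    simp only [Set.mem_iInter]
    exact ⟨fun h i hi => (hω i hi).1 (h i hi), fun h i hi => (hω i hi).2 (h i hi)⟩
  rw [h1, h S hsets]
  exact Finset.prod_congr rfl fun i _ => (measure_congr (key i)).symm

end Aux

lemma aux_lintegral_gammaPDF_Ioi {a r : ℝ} (ha : 0 < a) (hr : 0 < r) :
    ∫⁻ y in Ioi (0 : ℝ), gammaPDF a r y = 1 := by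
  have h1 := lintegral_gammaPDF_eq_one ha hr
  have h2 : ∫⁻ y, gammaPDF a r y =
      (∫⁻ y in Iio (0:ℝ), gammaPDF a r y) + ∫⁻ y in Ici (0:ℝ), gammaPDF a r y := by
    rw [← lintegral_add_compl _ measurableSet_Iio, compl_Iio]
  rw [lintegral_gammaPDF_of_nonpos le_rfl, zero_add] at h2
  rw [← MeasureTheory.Measure.restrict_congr_set Ioi_ae_eq_Ici] at h2
  rw [← h2, h1]

lemma aux_exp_lint_A {r t : ℝ} (hr : 0 < r) (ht : 0 ≤ t) :
    ∫⁻ y, ENNReal.ofReal (rexp (-(t * y))) ∂expMeasure r = ENNReal.ofReal (r / (t + r)) := by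
  have htr : 0 < t + r := by linarith
  have hmg : ∀ a b : ℝ, Measurable (gammaPDF a b) :=
    fun a b => (measurable_gammaPDFReal a b).ennreal_ofReal
  rw [expMeasure, gammaMeasure, lintegral_withDensity_eq_lintegral_mul _ (hmg 1 r)
    (by fun_prop)]
  have hsplit : ∫⁻ y, (gammaPDF 1 r * fun y => ENNReal.ofReal (rexp (-(t * y)))) y =
      ∫⁻ y in Ioi (0:ℝ), (gammaPDF 1 r * fun y => ENNReal.ofReal (rexp (-(t * y)))) y := by
    rw [← lintegral_add_compl _ measurableSet_Iio (μ := volume), compl_Iio,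
      ← MeasureTheory.Measure.restrict_congr_set Ioi_ae_eq_Ici]
    have : ∫⁻ y in Iio (0:ℝ), (gammaPDF 1 r * fun y => ENNReal.ofReal (rexp (-(t * y)))) y = 0 := by
      simp only [Pi.mul_apply]
      rw [lintegral_eq_zero_iff (f := fun y => gammaPDF 1 r y * ENNReal.ofReal (rexp (-(t * y))))
        ((hmg 1 r).mul (by fun_prop))]
      filter_upwards [ae_restrict_mem measurableSet_Iio] with y hy
      simp [Pi.mul_apply, gammaPDF_of_neg hy]
    rw [this, zero_add]
  rw [hsplit]
  have hcong : ∫⁻ y in Ioi (0:ℝ), (gammaPDF 1 r * fun y => ENNReal.ofReal (rexp (-(t * y)))) y =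
      ∫⁻ y in Ioi (0:ℝ), ENNReal.ofReal (r / (t + r)) * gammaPDF 1 (t + r) y := by
    refine setLIntegral_congr_fun measurableSet_Ioi (fun y hy => ?_)
    have hy' : (0:ℝ) ≤ y := le_of_lt hy
    rw [Pi.mul_apply, gammaPDF, gammaPDFReal, if_pos hy', gammaPDF, gammaPDFReal, if_pos hy',
      ← ENNReal.ofReal_mul (by positivity), ← ENNReal.ofReal_mul (by positivity)]
    congr 1
    simp only [Real.Gamma_one, sub_self, Real.rpow_zero, Real.rpow_one, div_one, mul_one,
      pow_one]
    rw [mul_assoc, ← Real.exp_add]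
    have hE : rexp (-(r * y) + -(t * y)) = rexp (-((t + r) * y)) := by ring_nf
    rw [hE]
    field_simp
  rw [hcong, lintegral_const_mul _ (hmg _ _), aux_lintegral_gammaPDF_Ioi
    zero_lt_one htr, mul_one]

lemma aux_Gamma_two : Real.Gamma 2 = 1 := by
  have := Real.Gamma_nat_eq_factorial 1
  norm_num at this
  convert this using 2
  norm_num

lemma aux_exp_lint_B {r t : ℝ} (hr : 0 < r) (ht : 0 ≤ t) :
    ∫⁻ y, ENNReal.ofReal (y * rexp (-(t * y))) ∂expMeasure r =
      ENNReal.ofReal (r / (t + r) ^ 2) := by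
  have htr : 0 < t + r := by linarith
  have hmg : ∀ a b : ℝ, Measurable (gammaPDF a b) :=
    fun a b => (measurable_gammaPDFReal a b).ennreal_ofReal
  rw [expMeasure, gammaMeasure, lintegral_withDensity_eq_lintegral_mul _ (hmg 1 r)
    (by fun_prop)]
  have hsplit : ∫⁻ y, (gammaPDF 1 r * fun y => ENNReal.ofReal (y * rexp (-(t * y)))) y =
      ∫⁻ y in Ioi (0:ℝ), (gammaPDF 1 r * fun y => ENNReal.ofReal (y * rexp (-(t * y)))) y := by
    rw [← lintegral_add_compl _ measurableSet_Iio (μ := volume), compl_Iio,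
      ← MeasureTheory.Measure.restrict_congr_set Ioi_ae_eq_Ici]
    have : ∫⁻ y in Iio (0:ℝ),
        (gammaPDF 1 r * fun y => ENNReal.ofReal (y * rexp (-(t * y)))) y = 0 := by
      simp only [Pi.mul_apply]
      rw [lintegral_eq_zero_iff (f := fun y => gammaPDF 1 r y * ENNReal.ofReal (y * rexp (-(t * y))))
        ((hmg 1 r).mul (by fun_prop))]
      filter_upwards [ae_restrict_mem measurableSet_Iio] with y hy
      simp [Pi.mul_apply, gammaPDF_of_neg hy]
    rw [this, zero_add]
  rw [hsplit]
  have hcong : ∫⁻ y in Ioi (0:ℝ),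
      (gammaPDF 1 r * fun y => ENNReal.ofReal (y * rexp (-(t * y)))) y =
      ∫⁻ y in Ioi (0:ℝ), ENNReal.ofReal (r / (t + r) ^ 2) * gammaPDF 2 (t + r) y := by
    refine setLIntegral_congr_fun measurableSet_Ioi (fun y hy => ?_)
    have hy' : (0:ℝ) ≤ y := le_of_lt hy
    rw [Pi.mul_apply, gammaPDF, gammaPDFReal, if_pos hy', gammaPDF, gammaPDFReal, if_pos hy',
      ← ENNReal.ofReal_mul (by positivity), ← ENNReal.ofReal_mul (by positivity)]
    congr 1
    simp only [Real.Gamma_one, aux_Gamma_two, sub_self, Real.rpow_zero, Real.rpow_one, div_one,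
      mul_one, pow_one]
    have h21 : (2:ℝ) - 1 = 1 := by norm_num
    rw [h21, Real.rpow_one]
    have hE : rexp (-((t + r) * y)) = rexp (-(r * y)) * rexp (-(t * y)) := by
      rw [← Real.exp_add]; ring_nf
    rw [hE]
    field_simp
    ring
    rw [Real.rpow_two]; ring
  rw [hcong, lintegral_const_mul _ (hmg _ _), aux_lintegral_gammaPDF_Ioi two_pos htr, mul_one]

lemma aux_inv_eq_lintegral_exp {s a : ℝ} (hs : 0 < s) (ha : 0 ≤ a) :
    ENNReal.ofReal (a / s) = ∫⁻ t in Ioi (0:ℝ), ENNReal.ofReal (a * rexp (-(t * s))) := by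
  have hmg : Measurable (gammaPDF 1 s) := (measurable_gammaPDFReal 1 s).ennreal_ofReal
  have hcong : ∫⁻ t in Ioi (0:ℝ), ENNReal.ofReal (a * rexp (-(t * s))) =
      ∫⁻ t in Ioi (0:ℝ), ENNReal.ofReal (a / s) * gammaPDF 1 s t := by
    refine setLIntegral_congr_fun measurableSet_Ioi (fun t ht => ?_)
    rw [gammaPDF, gammaPDFReal, if_pos (le_of_lt ht),
      ← ENNReal.ofReal_mul (by positivity)]
    congr 1
    simp only [Real.Gamma_one, sub_self, Real.rpow_zero, pow_one, div_one, mul_one]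
    rw [show rexp (-(s * t)) = rexp (-(t * s)) by ring_nf]
    field_simp
    ring
    rw [Real.rpow_one]
  rw [hcong, lintegral_const_mul _ hmg, aux_lintegral_gammaPDF_Ioi zero_lt_one hs, mul_one]

lemma aux_lintegral_prod_indep {Ω : Type*} [MeasurableSpace Ω] {μ : Measure Ω}
    [IsProbabilityMeasure μ] {ι : Type*} {W : ι → Ω → ℝ} (hW : ∀ i, Measurable (W i))
    (hind : iIndepFun W μ) (f : ι → ℝ → ℝ≥0∞)
    (hf : ∀ i, Measurable (f i)) (s : Finset ι) :
    ∫⁻ ω, ∏ j ∈ s, f j (W j ω) ∂μ = ∏ j ∈ s, ∫⁻ ω, f j (W j ω) ∂μ := by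
  classical
  have hg : iIndepFun (fun i => f i ∘ W i) μ := hind.comp f hf
  have hgm : ∀ i, Measurable (f i ∘ W i) := fun i => (hf i).comp (hW i)
  induction s using Finset.induction_on with
  | empty => simp
  | insert _ _ hi ih =>
    rename_i i s
    clear * - hi ih hg hgm
    simp only [Finset.prod_insert hi]
    rw [← ih]
    have hIndep : IndepFun (f i ∘ W i) (fun ω => ∏ j ∈ s, (f j ∘ W j) ω) μ := by
      have := (hg.indepFun_finsetProd_of_notMem hgm hi).symm
      convert this using 1
      ext ω
      simp [Finset.prod_apply]
    have := lintegral_mul_eq_lintegral_mul_lintegral_of_indepFun (μ := μ)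
      (hgm i) (Finset.measurable_prod s (fun j _ => hgm j)) hIndep
    simp only [Pi.mul_apply, Finset.prod_apply, Function.comp_apply] at this ⊢
    rw [this]

lemma aux_expMeasure_Iic {r : ℝ} : expMeasure r (Iic 0) = 0 := by
  rw [expMeasure, gammaMeasure, withDensity_apply _ measurableSet_Iic,
    ← MeasureTheory.Measure.restrict_congr_set Iio_ae_eq_Iic]
  exact lintegral_gammaPDF_of_nonpos le_rfl

lemma aux_pointwise {n : ℕ} (t : ℝ) (c x : Fin n → ℝ) (hc : ∀ i, 0 ≤ c i) (hx : ∀ i, 0 < x i) :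
    ENNReal.ofReal ((∑ i, c i * x i) * rexp (-(t * ∑ j, x j))) =
      ∑ i, ENNReal.ofReal (c i) *
        ∏ j, (if j = i then ENNReal.ofReal (x j * rexp (-(t * x j)))
              else ENNReal.ofReal (rexp (-(t * x j)))) := by
  have hexp : rexp (-(t * ∑ j, x j)) = ∏ j, rexp (-(t * x j)) := by
    rw [← Real.exp_sum]
    congr 1
    rw [Finset.mul_sum, ← Finset.sum_neg_distrib]
  rw [hexp, Finset.sum_mul, ENNReal.ofReal_sum_of_nonneg (fun i _ => by
    have := hc i; have := (hx i).le; positivity)]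
  refine Finset.sum_congr rfl fun i _ => ?_
  have hprod : ∏ j, (if j = i then ENNReal.ofReal (x j * rexp (-(t * x j)))
      else ENNReal.ofReal (rexp (-(t * x j)))) =
      ENNReal.ofReal (x i * rexp (-(t * x i))) *
        ∏ j ∈ Finset.univ.erase i, ENNReal.ofReal (rexp (-(t * x j))) := by
    rw [← Finset.mul_prod_erase Finset.univ _ (Finset.mem_univ i), if_pos rfl]
    congr 1
    refine Finset.prod_congr rfl fun j hj => ?_
    rw [if_neg (Finset.ne_of_mem_erase hj)]
  rw [hprod, ← ENNReal.ofReal_prod_of_nonneg (fun j _ => (Real.exp_pos _).le),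
    ← ENNReal.ofReal_mul (by have := (hx i).le; positivity), ← ENNReal.ofReal_mul (hc i)]
  congr 1
  rw [show ∏ j, rexp (-(t * x j)) = rexp (-(t * x i)) *
      ∏ j ∈ Finset.univ.erase i, rexp (-(t * x j)) from
    (Finset.mul_prod_erase Finset.univ _ (Finset.mem_univ i)).symm]
  ring

lemma aux_final {n : ℕ} (t : ℝ) (ht : 0 < t) (β c : Fin n → ℝ) (hβ : ∀ i, 0 < β i)
    (hc : ∀ i, 0 ≤ c i) :
    ∑ i, ENNReal.ofReal (c i) * ∏ j, (if j = i then ENNReal.ofReal (β j / (t + β j) ^ 2)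
        else ENNReal.ofReal (β j / (t + β j))) =
      ENNReal.ofReal ((∏ j, β j / (t + β j)) * ∑ i, c i / (t + β i)) := by
  have htβ : ∀ j, 0 < t + β j := fun j => by have := hβ j; linarith
  rw [Finset.mul_sum, ENNReal.ofReal_sum_of_nonneg (fun i _ => by
    have h1 : 0 ≤ ∏ j, β j /(t + β j) := Finset.prod_nonneg fun j _ =>
      div_nonneg (hβ j).le (htβ j).le
    have := hc i; have := (htβ i).le; positivity)]
  refine (Finset.sum_congr rfl fun i _ => ?_).symm
  have hprod : ∏ j, (if j = i then ENNReal.ofReal (β j / (t + β j) ^ 2)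
      else ENNReal.ofReal (β j / (t + β j))) =
      ENNReal.ofReal (β i / (t + β i) ^ 2) *
        ∏ j ∈ Finset.univ.erase i, ENNReal.ofReal (β j / (t + β j)) := by
    rw [← Finset.mul_prod_erase Finset.univ _ (Finset.mem_univ i), if_pos rfl]
    congr 1
    refine Finset.prod_congr rfl fun j hj => ?_
    rw [if_neg (Finset.ne_of_mem_erase hj)]
  rw [hprod, ← ENNReal.ofReal_prod_of_nonneg (fun j _ => div_nonneg (hβ j).le (htβ j).le),
    ← ENNReal.ofReal_mul (by have := (hβ i).le; have := (htβ i).le; positivity),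
    ← ENNReal.ofReal_mul (hc i)]
  congr 1
  rw [show (∏ j, β j / (t + β j)) = (β i / (t + β i)) *
      ∏ j ∈ Finset.univ.erase i, β j / (t + β j) from
    (Finset.mul_prod_erase Finset.univ _ (Finset.mem_univ i)).symm]
  have hne : t + β i ≠ 0 := (htβ i).ne'
  field_simp

/-- Integral expression for ratios of weighted sums of independent
exponential variables. If `W_1, …, W_n` are independent, `W_i` exponential with rate
`β_i > 0`, and `c_1, …, c_n ≥ 0`, then
`E[(Σ c_i W_i)/(Σ W_i)] = ∫_0^∞ (Π_j β_j/(t+β_j)) (Σ_i c_i/(t+β_i)) dt`. -/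
theorem expectation_ratio_weighted_exponential_sums
    {Ω : Type*} [MeasurableSpace Ω] (μ : Measure Ω) [IsProbabilityMeasure μ]
    (n : ℕ) (hn : 1 ≤ n)
    (W : Fin n → Ω → ℝ) (β : Fin n → ℝ) (hβ : ∀ i, 0 < β i)
    (hindep : iIndepFun W μ)
    (hlaw : ∀ i, Measure.map (W i) μ = expMeasure (β i))
    (c : Fin n → ℝ) (hc : ∀ i, 0 ≤ c i) :
    ∫ ω, (∑ i, c i * W i ω) / (∑ i, W i ω) ∂μ =
      ∫ t in Set.Ioi (0 : ℝ),
        (∏ j, β j / (t + β j)) * (∑ i, c i / (t + β i)) := by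
  classical
  haveI : Nonempty (Fin n) := Fin.pos_iff_nonempty.1 hn
  have hWae : ∀ i, AEMeasurable (W i) μ := by
    intro i
    by_contra h
    have h0 : Measure.map (W i) μ = 0 := Measure.map_of_not_aemeasurable h
    haveI : IsProbabilityMeasure (expMeasure (β i)) := isProbabilityMeasure_expMeasure (hβ i)
    have h1 : expMeasure (β i) Set.univ = 1 := measure_univ
    rw [← hlaw i, h0] at h1
    simp at h1
  set V : Fin n → Ω → ℝ := fun i => (hWae i).mk (W i) with hVdef
  have hV : ∀ i, Measurable (V i) := fun i => (hWae i).measurable_mk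
  have hVeq : ∀ i, W i =ᵐ[μ] V i := fun i => (hWae i).ae_eq_mk
  have hVindep : iIndepFun V μ := aux_iIndepFun_ae_eq hindep hVeq
  have hVlaw : ∀ i, Measure.map (V i) μ = expMeasure (β i) := fun i => by
    rw [← Measure.map_congr (hVeq i), hlaw i]
  have hpos : ∀ᵐ ω ∂μ, ∀ i, 0 < V i ω := by
    rw [ae_all_iff]
    intro i
    have h0 : μ (V i ⁻¹' Set.Iic 0) = 0 := by
      rw [← Measure.map_apply (hV i) measurableSet_Iic, hVlaw i, aux_expMeasure_Iic]
    rw [ae_iff]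
    convert h0 using 2
    ext ω
    simp [not_lt]
  have hLW : ∫ ω, (∑ i, c i * W i ω) / (∑ i, W i ω) ∂μ
      = ∫ ω, (∑ i, c i * V i ω) / (∑ i, V i ω) ∂μ := by
    apply integral_congr_ae
    filter_upwards [ae_all_iff.2 hVeq] with ω h
    simp only [h]
  rw [hLW]
  have hFnn : 0 ≤ᵐ[μ] fun ω => (∑ i, c i * V i ω) / (∑ i, V i ω) := by
    filter_upwards [hpos] with ω h
    exact div_nonneg (Finset.sum_nonneg fun i _ => mul_nonneg (hc i) (h i).le)
      (Finset.sum_nonneg fun i _ => (h i).le)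
  have hFm : AEStronglyMeasurable (fun ω => (∑ i, c i * V i ω) / (∑ i, V i ω)) μ :=
    Measurable.aestronglyMeasurable
      ((Finset.measurable_sum _ (fun i _ => (hV i).const_mul _)).div
        (Finset.measurable_sum _ (fun i _ => hV i)))
  rw [MeasureTheory.integral_eq_lintegral_of_nonneg_ae hFnn hFm]
  have htβ : ∀ {t : ℝ}, 0 < t → ∀ j, 0 < t + β j := fun ht j => by have := hβ j; linarith
  have hGnn : 0 ≤ᵐ[volume.restrict (Set.Ioi 0)] fun t =>
      (∏ j, β j / (t + β j)) * ∑ i, c i / (t + β i) := by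
    filter_upwards [ae_restrict_mem measurableSet_Ioi] with t ht
    exact mul_nonneg (Finset.prod_nonneg fun j _ => div_nonneg (hβ j).le (htβ ht j).le)
      (Finset.sum_nonneg fun i _ => div_nonneg (hc i) (htβ ht i).le)
  have hGm : AEStronglyMeasurable (fun t : ℝ => (∏ j, β j / (t + β j)) * ∑ i, c i / (t + β i))
      (volume.restrict (Set.Ioi 0)) :=
    Measurable.aestronglyMeasurable
      ((Finset.measurable_prod _ fun j _ =>
          measurable_const.div (measurable_id.add_const _)).mul
        (Finset.measurable_sum _ fun i _ => measurable_const.div (measurable_id.add_const _)))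
  rw [MeasureTheory.integral_eq_lintegral_of_nonneg_ae hGnn hGm]
  congr 1
  calc ∫⁻ ω, ENNReal.ofReal ((∑ i, c i * V i ω) / (∑ i, V i ω)) ∂μ
      = ∫⁻ ω, (∫⁻ t in Set.Ioi (0:ℝ),
          ENNReal.ofReal ((∑ i, c i * V i ω) * rexp (-(t * ∑ j, V j ω)))) ∂μ := by
        apply lintegral_congr_ae
        filter_upwards [hpos] with ω h
        exact aux_inv_eq_lintegral_exp (Finset.sum_pos (fun i _ => h i) Finset.univ_nonempty)
          (Finset.sum_nonneg fun i _ => mul_nonneg (hc i) (h i).le)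
    _ = ∫⁻ t in Set.Ioi (0:ℝ), (∫⁻ ω,
          ENNReal.ofReal ((∑ i, c i * V i ω) * rexp (-(t * ∑ j, V j ω))) ∂μ) := by
        apply lintegral_lintegral_swap
        have m1 : Measurable fun p : Ω × ℝ => ∑ i, c i * V i p.1 :=
          Finset.measurable_sum _ fun i _ => ((hV i).comp measurable_fst).const_mul _
        have m2 : Measurable fun p : Ω × ℝ => ∑ j, V j p.1 :=
          Finset.measurable_sum _ fun i _ => (hV i).comp measurable_fst
        exact ((m1.mul ((measurable_snd.mul m2).neg.exp))).ennreal_ofReal.aemeasurable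
    _ = ∫⁻ t in Set.Ioi (0:ℝ),
          ENNReal.ofReal ((∏ j, β j / (t + β j)) * ∑ i, c i / (t + β i)) := by
        apply lintegral_congr_ae
        filter_upwards [ae_restrict_mem measurableSet_Ioi] with t ht
        have ht' : (0:ℝ) < t := ht
        have hfm : ∀ (i j : Fin n), Measurable (fun y : ℝ =>
            if j = i then ENNReal.ofReal (y * rexp (-(t * y)))
            else ENNReal.ofReal (rexp (-(t * y)))) := fun i j => by
          split_ifs
          · exact (measurable_id.mul ((measurable_id.const_mul t).neg.exp)).ennreal_ofReal
          · exact ((measurable_id.const_mul t).neg.exp).ennreal_ofReal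
        have step1 : ∫⁻ ω, ENNReal.ofReal ((∑ i, c i * V i ω) * rexp (-(t * ∑ j, V j ω))) ∂μ
            = ∫⁻ ω, ∑ i, ENNReal.ofReal (c i) *
                ∏ j, (if j = i then ENNReal.ofReal (V j ω * rexp (-(t * V j ω)))
                      else ENNReal.ofReal (rexp (-(t * V j ω)))) ∂μ := by
          apply lintegral_congr_ae
          filter_upwards [hpos] with ω h
          exact aux_pointwise t c (fun j => V j ω) hc h
        have hsummand : ∀ i : Fin n, Measurable (fun ω => ENNReal.ofReal (c i) *
            ∏ j, (if j = i then ENNReal.ofReal (V j ω * rexp (-(t * V j ω)))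
                  else ENNReal.ofReal (rexp (-(t * V j ω))))) := by
          intro i
          apply Measurable.const_mul
          apply Finset.measurable_prod
          intro j _
          exact (hfm i j).comp (hV j)
        rw [step1, lintegral_finset_sum _ (fun i _ => hsummand i)]
        have step2 : ∀ i : Fin n, ∫⁻ ω, ENNReal.ofReal (c i) *
            ∏ j, (if j = i then ENNReal.ofReal (V j ω * rexp (-(t * V j ω)))
                  else ENNReal.ofReal (rexp (-(t * V j ω)))) ∂μ
            = ENNReal.ofReal (c i) * ∏ j, (if j = i then ENNReal.ofReal (β j / (t + β j) ^ 2)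
                  else ENNReal.ofReal (β j / (t + β j))) := by
          intro i
          have hpm : Measurable (fun ω => ∏ j, (if j = i then
              ENNReal.ofReal (V j ω * rexp (-(t * V j ω)))
              else ENNReal.ofReal (rexp (-(t * V j ω))))) := by
            apply Finset.measurable_prod
            intro j _
            exact (hfm i j).comp (hV j)
          rw [lintegral_const_mul _ hpm]
          congr 1
          have hprodeq := aux_lintegral_prod_indep hV hVindep
            (fun j y => if j = i then ENNReal.ofReal (y * rexp (-(t * y)))
              else ENNReal.ofReal (rexp (-(t * y)))) (hfm i) Finset.univ
          rw [hprodeq]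
          refine Finset.prod_congr rfl fun j _ => ?_
          rw [← lintegral_map (hfm i j) (hV j), hVlaw j]
          by_cases h : j = i
          · simp only [if_pos h]
            exact aux_exp_lint_B (hβ j) ht'.le
          · simp only [if_neg h]
            exact aux_exp_lint_A (hβ j) ht'.le
        simp_rw [step2]
        exact aux_final t ht' β c hβ hc
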